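/- For real x ≠ 0 and all n ≥ 2, the convolution identity O_n'(x) + (n/x)·O_n(x) = ∑_{j=1}^{n−1} O_j(x)·O_{n−j}(x) holds. -/

import Mathlib

noncomputable def oresme : ℕ → ℝ → ℝ
  | 0 => fun _ => 0
  | 1 => fun x => 1/x
  | (n+2) => fun x => oresme (n+1) x - (1/x^2) * oresme n x

lemma hdiffinv {x : ℝ} (hx : x ≠ 0) : DifferentiableAt ℝ (fun x : ℝ => 1/x^2) x := by
  simp only [one_div]
  exact (differentiableAt_pow 2).inv (pow_ne_zero 2 hx)

lemma oresme_diff {x : ℝ} (hx : x ≠ 0) : ∀ n, DifferentiableAt ℝ (oresme n) x := by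
  intro n
  induction n using Nat.twoStepInduction with
  | zero => simp [oresme]
  | one =>
    simp only [oresme, one_div]
    exact differentiableAt_inv hx
  | more n ih1 ih2 =>
    show DifferentiableAt ℝ (fun x => oresme (n+1) x - (1/x^2) * oresme n x) x
    exact ih2.sub ((hdiffinv hx).mul ih1)

lemma deriv_invsq {x : ℝ} (hx : x ≠ 0) : deriv (fun x : ℝ => 1/x^2) x = -2/x^3 := by
  have h : HasDerivAt (fun x : ℝ => 1/x^2) (-2/x^3) x := by
    have := (hasDerivAt_pow 2 x).inv (pow_ne_zero 2 hx)
    convert this using 1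
    · rfl
    · rfl
    · ext y; simp [one_div]
    · field_simp; ring
  exact h.deriv

lemma oresme_deriv_rec {x : ℝ} (hx : x ≠ 0) (n : ℕ) :
    deriv (oresme (n+2)) x =
      deriv (oresme (n+1)) x - ((-2/x^3) * oresme n x + (1/x^2) * deriv (oresme n) x) := by
  have h : oresme (n+2) = fun x => oresme (n+1) x - (1/x^2) * oresme n x := rfl
  rw [h, deriv_fun_sub (oresme_diff hx _) ((hdiffinv hx).fun_mul (oresme_diff hx _)),
    deriv_fun_mul (hdiffinv hx) (oresme_diff hx _), deriv_invsq hx]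

lemma deriv_one_div {x : ℝ} : deriv (fun y : ℝ => 1/y) x = -(1/x^2) := by
  simp only [one_div]
  rw [deriv_inv]

lemma oresme_deriv_one {x : ℝ} : deriv (oresme 1) x = -(1/x^2) := by
  have h : oresme 1 = fun y : ℝ => 1/y := rfl
  rw [h, deriv_one_div]

lemma oresme_two : oresme 2 = fun y : ℝ => 1/y := by
  ext y; show oresme 1 y - (1/y^2) * oresme 0 y = 1/y
  show 1/y - (1/y^2) * 0 = 1/y
  ring

lemma oresme_deriv_two {x : ℝ} : deriv (oresme 2) x = -(1/x^2) := by
  rw [oresme_two, deriv_one_div]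

lemma oresme_sum_rec {x : ℝ} (m : ℕ) (hm : 1 ≤ m) :
    ∑ j ∈ Finset.Icc 1 (m+1), oresme j x * oresme (m+2-j) x
      = ∑ j ∈ Finset.Icc 1 m, oresme j x * oresme (m+1-j) x
        - (1/x^2) * ∑ j ∈ Finset.Icc 1 (m-1), oresme j x * oresme (m-j) x
        + (1/x) * oresme (m+1) x := by
  rw [Finset.sum_Icc_succ_top (by omega : 1 ≤ m+1)]
  have key : ∀ j ∈ Finset.Icc 1 m, oresme j x * oresme (m+2-j) x
      = oresme j x * oresme (m+1-j) x - (1/x^2) * (oresme j x * oresme (m-j) x) := by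
    intro j hj
    simp only [Finset.mem_Icc] at hj
    rw [show m+2-j = (m-j)+2 from by omega, show m+1-j = (m-j)+1 from by omega]
    show oresme j x * (oresme ((m-j)+1) x - (1/x^2) * oresme (m-j) x) = _
    ring
  rw [Finset.sum_congr rfl key, Finset.sum_sub_distrib, ← Finset.mul_sum]
  have hsplit : ∑ j ∈ Finset.Icc 1 m, oresme j x * oresme (m-j) x
      = ∑ j ∈ Finset.Icc 1 (m-1), oresme j x * oresme (m-j) x := by
    obtain ⟨k, rfl⟩ : ∃ k, m = k + 1 := ⟨m-1, by omega⟩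
    rw [Finset.sum_Icc_succ_top (by omega : 1 ≤ k+1)]
    simp [oresme]
  rw [hsplit]
  have h1 : oresme (m+2-(m+1)) x = 1/x := by
    rw [show m+2-(m+1) = 1 from by omega]; rfl
  rw [h1]; ring

theorem oresme_deriv_convolution (x : ℝ) (hx : x ≠ 0) (n : ℕ) (hn : 2 ≤ n) :
    deriv (oresme n) x + (n/x) * oresme n x =
      ∑ j ∈ Finset.Icc 1 (n-1), oresme j x * oresme (n-j) x := by
  obtain ⟨m, rfl⟩ : ∃ m, n = m + 2 := ⟨n-2, by omega⟩
  clear hn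
  induction m using Nat.twoStepInduction with
  | zero =>
    norm_num [oresme_deriv_two]
    rw [show oresme 2 x = 1/x from by rw [oresme_two], show oresme 1 x = 1/x from rfl]
    field_simp
    ring
  | one =>
    have hd := oresme_deriv_rec hx 1
    rw [oresme_deriv_one] at hd
    have h2 : deriv (oresme 2) x = -(1/x^2) := oresme_deriv_two
    rw [show (1:ℕ)+2 = 3 from rfl] at hd
    have h3 : oresme 3 x = 1/x - (1/x^2) * (1/x) := by
      show oresme 2 x - (1/x^2) * oresme 1 x = _
      rw [show oresme 2 x = 1/x from by rw [oresme_two]]; rfl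
    rw [show (1:ℕ)+2 = 3 from rfl, hd, h2, h3]
    rw [show (3:ℕ)-1 = 2 from rfl,
      show Finset.Icc 1 2 = {1, 2} from rfl, Finset.sum_insert (by norm_num),
      Finset.sum_singleton]
    rw [show oresme (3-1) x = 1/x from by rw [show (3:ℕ)-1 = 2 from rfl, oresme_two],
      show oresme (3-2) x = 1/x from rfl]
    push_cast
    field_simp
    ring
  | more m ih1 ih2 =>
    have hd := oresme_deriv_rec hx (m+2)
    have hs := oresme_sum_rec (x := x) (m+2) (by omega)
    -- normalize index arithmetic
    have e0 : m + 2 + 2 - 1 = m + 2 + 1 := by omega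
    have e1 : ∑ j ∈ Finset.Icc 1 (m+2), oresme j x * oresme (m+2+1-j) x
        = ∑ j ∈ Finset.Icc 1 (m+1+2-1), oresme j x * oresme (m+1+2-j) x := by
      apply Finset.sum_congr (by congr 1)
      intro j hj
      rw [show m+2+1-j = m+1+2-j from by omega]
    have e2 : (∑ j ∈ Finset.Icc 1 (m+2-1), oresme j x * oresme (m+2-j) x) =
        ∑ j ∈ Finset.Icc 1 (m+2-1), oresme j x * oresme (m+2-j) x := rfl
    rw [e0, hd]
    rw [show oresme (m+2+2) x = oresme (m+2+1) x - (1/x^2) * oresme (m+2) x from rfl]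
    rw [hs, e1, ← ih2, ← ih1]
    rw [show oresme (m+2+1) x = oresme (m+1+2) x from rfl]
    push_cast
    field_simp
    ring
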